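/- Let 1 ≤ j ≤ n, let E be a j-dimensional linear subspace of ℝ^n, let u_1, u_2 be proper, lower semicontinuous, super-coercive convex functions on ℝ^n, and let λ_1, λ_2 ≥ 0. Then proj_E((λ_1 ⊡ u_1) □ (λ_2 ⊡ u_2)) = (λ_1 ⊡ proj_E u_1) □ (λ_2 ⊡ proj_E u_2), where epi-sum and epi-multiplication on the right are considered with respect to the ambient space E. -/

import Mathlib

open Metric MeasureTheory Set
open scoped InnerProductSpace RealInnerProductSpace ENNReal Pointwise NNReal Classical

noncomputable section

/-- Support function of a convex body. -/
def supportFn {n : ℕ} (K : ConvexBody (EuclideanSpace ℝ (Fin n)))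
    (u : EuclideanSpace ℝ (Fin n)) : ℝ :=
  sSup ((fun y => ⟪u, y⟫_ℝ) '' (K : Set (EuclideanSpace ℝ (Fin n))))

/-- Subdifferential of a real-valued function. -/
def subdiff {W : Type*} [NormedAddCommGroup W] [InnerProductSpace ℝ W]
    (w : W → ℝ) (x : W) : Set W :=
  {y | ∀ z, w x + ⟪y, z - x⟫_ℝ ≤ w z}

/-- Monge–Ampère measure (as a set function) of a finite-valued convex function. -/
def MAfn {n : ℕ} (v : EuclideanSpace ℝ (Fin n) → ℝ) (B : Set (EuclideanSpace ℝ (Fin n))) : ℝ≥0∞ :=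
  volume (⋃ b ∈ B, subdiff v b)

/-- The Euclidean unit ball as a convex body. -/
def unitBody (n : ℕ) : ConvexBody (EuclideanSpace ℝ (Fin n)) :=
  ⟨closedBall 0 1, convex_closedBall 0 1, isCompact_closedBall 0 1,
    Metric.nonempty_closedBall.mpr zero_le_one⟩

/-- κ_i, the volume of the i-dimensional unit ball. -/
def kappa (i : ℕ) : ℝ := (volume (closedBall (0 : EuclideanSpace ℝ (Fin i)) 1)).toReal

/-- segment from origin to a point, as a convex body -/
def segBody {n : ℕ} (e : EuclideanSpace ℝ (Fin n)) : ConvexBody (EuclideanSpace ℝ (Fin n)) :=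
  ⟨segment ℝ 0 e, convex_segment 0 e, by
      rw [segment_eq_image ℝ 0 e]
      exact (isCompact_Icc).image (by fun_prop),
    ⟨0, left_mem_segment ℝ 0 e⟩⟩

/-- convex indicator function, with values in EReal -/
def indicatorE {W : Type*} [Zero W] (s : Set W) : W → EReal := fun x => if x ∈ s then (0 : EReal) else ⊤

/-- infimal convolution -/
def infConv {W : Type*} [AddGroup W] (u v : W → EReal) : W → EReal :=
  fun x => ⨅ y, u (x - y) + v y

/-- epi-multiplication -/
def epiMul {W : Type*} [AddCommGroup W] [Module ℝ W] (lam : ℝ) (u : W → EReal) : W → EReal :=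
  if lam = 0 then indicatorE {0} else fun x => (lam : EReal) * u (lam⁻¹ • x)

/-- Legendre--Fenchel conjugate -/
def conj {W : Type*} [NormedAddCommGroup W] [InnerProductSpace ℝ W] (u : W → EReal) : W → EReal :=
  fun x => ⨆ y, ((⟪x, y⟫_ℝ : ℝ) : EReal) - u y

/-- an EReal-valued function is proper -/
def ProperE {W : Type*} (u : W → EReal) : Prop := (∀ x, u x ≠ ⊥) ∧ ∃ x, u x ≠ ⊤

/-- convexity via the epigraph -/
def ConvexE {W : Type*} [AddCommGroup W] [Module ℝ W] (u : W → EReal) : Prop :=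
  Convex ℝ {p : W × ℝ | u p.1 ≤ (p.2 : EReal)}

/-- super-coercive -/
def SuperCoercive {W : Type*} [NormedAddCommGroup W] (u : W → EReal) : Prop :=
  ∀ c : ℝ, ∃ R : ℝ, ∀ x, R ≤ ‖x‖ → ((c * ‖x‖ : ℝ) : EReal) ≤ u x



/-- The projection function of `u` onto the subspace `E`:
`proj_E u (x) = inf_{y ∈ E^⊥} u (x + y)`. -/
def projFn {n : ℕ} (E : Submodule ℝ (EuclideanSpace ℝ (Fin n)))
    (u : EuclideanSpace ℝ (Fin n) → EReal) : ↥E → EReal :=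
  fun x => ⨅ z : ↥Eᗮ, u (↑x + ↑z)

section Aux

/-- sum of infima equals infimum of sums for `EReal`, given non-`⊥` infima -/
lemma my_iInf_add {ι κ : Type*} [Nonempty ι] [Nonempty κ] {f : ι → EReal} {g : κ → EReal}
    (ha : (⨅ i, f i) ≠ ⊥) (hb : (⨅ j, g j) ≠ ⊥) :
    (⨅ i, f i) + ⨅ j, g j = ⨅ i, ⨅ j, f i + g j := by
  apply le_antisymm
  · exact le_iInf fun i => le_iInf fun j => add_le_add (iInf_le f i) (iInf_le g j)
  · apply EReal.le_add_of_forall_gt (.inl ha) (.inr hb)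
    intro a' ha' b' hb'
    obtain ⟨i, hi⟩ := iInf_lt_iff.mp ha'
    obtain ⟨j, hj⟩ := iInf_lt_iff.mp hb'
    exact le_trans (le_trans (iInf_le _ i) (iInf_le _ j)) (add_le_add hi.le hj.le)

/-- multiplication by a positive real commutes with `iInf` on `EReal` -/
lemma my_mul_iInf {ι : Type*} [Nonempty ι] {c : ℝ} (hc : 0 < c) (f : ι → EReal) :
    (c : EReal) * ⨅ i, f i = ⨅ i, (c : EReal) * f i := by
  have hc' : (0 : EReal) ≤ (c : EReal) := by exact_mod_cast hc.le
  apply le_antisymm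
  · exact le_iInf fun i => mul_le_mul_of_nonneg_left (iInf_le f i) hc'
  · have h1 : ((c⁻¹ : ℝ) : EReal) * (⨅ i, (c : EReal) * f i) ≤ ⨅ i, f i := by
      refine le_iInf fun i => ?_
      calc ((c⁻¹ : ℝ) : EReal) * ⨅ i, (c : EReal) * f i
          ≤ ((c⁻¹ : ℝ) : EReal) * ((c : EReal) * f i) :=
            mul_le_mul_of_nonneg_left (iInf_le _ i)
              (by exact_mod_cast (inv_nonneg.mpr hc.le))
        _ = f i := by
            rw [← mul_assoc, ← EReal.coe_mul, inv_mul_cancel₀ hc.ne', EReal.coe_one, one_mul]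
    calc ⨅ i, (c : EReal) * f i
        = (c : EReal) * (((c⁻¹ : ℝ) : EReal) * ⨅ i, (c : EReal) * f i) := by
          rw [← mul_assoc, ← EReal.coe_mul, mul_inv_cancel₀ hc.ne', EReal.coe_one, one_mul]
      _ ≤ (c : EReal) * ⨅ i, f i := mul_le_mul_of_nonneg_left h1 hc'

/-- a lower semicontinuous `EReal`-valued function avoiding `⊥` is bounded below on compacts -/
lemma lsc_bddBelow_on_compact {X : Type*} [TopologicalSpace X] {u : X → EReal}
    (hlsc : LowerSemicontinuous u) (hne : ∀ x, u x ≠ ⊥) {s : Set X} (hs : IsCompact s) :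
    ∃ m : ℝ, ∀ x ∈ s, (m : EReal) ≤ u x := by
  have hcov : s ⊆ ⋃ r : ℝ, u ⁻¹' Ioi (r : EReal) := by
    intro x _
    have hbot : (⊥ : EReal) < u x := Ne.bot_lt' (hne x).symm
    obtain ⟨r, _, hr⟩ := EReal.exists_between_coe_real hbot
    exact mem_iUnion.mpr ⟨r, hr⟩
  obtain ⟨t, ht⟩ := hs.elim_finite_subcover _ (fun r : ℝ => hlsc.isOpen_preimage r) hcov
  rcases t.eq_empty_or_nonempty with rfl | hne'
  · refine ⟨0, fun x hx => absurd (ht hx) (by simp)⟩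
  · refine ⟨t.min' hne', fun x hx => ?_⟩
    obtain ⟨r, hrt, hr⟩ := mem_iUnion₂.mp (ht hx)
    calc ((t.min' hne' : ℝ) : EReal) ≤ (r : EReal) := by exact_mod_cast t.min'_le r hrt
      _ ≤ u x := (mem_preimage.mp hr).le

/-- a proper, lsc, super-coercive function is bounded below -/
lemma exists_lb {n : ℕ} {u : EuclideanSpace ℝ (Fin n) → EReal} (hp : ProperE u)
    (hlsc : LowerSemicontinuous u) (hsc : SuperCoercive u) :
    ∃ m : ℝ, ∀ x, (m : EReal) ≤ u x := by
  obtain ⟨R, hR⟩ := hsc 0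
  obtain ⟨m, hm⟩ := lsc_bddBelow_on_compact hlsc hp.1
    (isCompact_closedBall (0 : EuclideanSpace ℝ (Fin n)) |R|)
  refine ⟨min m 0, fun x => ?_⟩
  by_cases hx : ‖x‖ ≤ |R|
  · exact le_trans (by exact_mod_cast min_le_left m 0)
      (hm x (mem_closedBall_zero_iff.mpr hx))
  · have h := hR x (le_trans (le_abs_self R) (le_of_not_ge hx))
    rw [zero_mul] at h
    exact le_trans (by exact_mod_cast min_le_right m 0) h

lemma indicatorE_apply {W : Type*} [Zero W] (s : Set W) (y : W) :
    indicatorE s y = if y ∈ s then (0 : EReal) else ⊤ := rfl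

/-- an epi-multiple of a bounded-below function is bounded below -/
lemma epiMul_lb {W : Type*} [AddCommGroup W] [Module ℝ W] {u : W → EReal} {m lam : ℝ}
    (hm : ∀ x, (m : EReal) ≤ u x) (hlam : 0 ≤ lam) :
    ∀ x, ((min (lam * m) 0 : ℝ) : EReal) ≤ epiMul lam u x := by
  intro x
  by_cases h : lam = 0
  · subst h
    rw [show epiMul (0:ℝ) u = indicatorE {0} from if_pos rfl]
    rw [indicatorE_apply]
    split_ifs
    · exact_mod_cast min_le_right (0 * m) 0
    · exact le_top
  · simp only [epiMul, if_neg h]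
    have h1 : ((lam * m : ℝ) : EReal) ≤ (lam : EReal) * u (lam⁻¹ • x) := by
      rw [EReal.coe_mul]
      exact mul_le_mul_of_nonneg_left (hm _) (by exact_mod_cast hlam)
    exact le_trans (by exact_mod_cast min_le_left (lam * m) 0) h1

/-- projection commutes with infimal convolution for bounded-below functions -/
lemma projFn_infConv {n : ℕ} (E : Submodule ℝ (EuclideanSpace ℝ (Fin n)))
    {v w : EuclideanSpace ℝ (Fin n) → EReal} {m : ℝ}
    (hv : ∀ x, (m : EReal) ≤ v x) (hw : ∀ x, (m : EReal) ≤ w x) :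
    projFn E (infConv v w) = infConv (projFn E v) (projFn E w) := by
  haveI : Nonempty ↥Eᗮ := ⟨0⟩
  funext x
  have hsup : E ⊔ Eᗮ = ⊤ := Submodule.sup_orthogonal_of_hasOrthogonalProjection
  have hbotv : ∀ y : ↥E, (⨅ z : ↥Eᗮ, v (↑y + ↑z)) ≠ ⊥ :=
    fun y => ((EReal.bot_lt_coe m).trans_le (le_iInf fun z => hv _)).ne'
  have hbotw : ∀ y : ↥E, (⨅ z : ↥Eᗮ, w (↑y + ↑z)) ≠ ⊥ :=
    fun y => ((EReal.bot_lt_coe m).trans_le (le_iInf fun z => hw _)).ne'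
  have hRHS : infConv (projFn E v) (projFn E w) x
      = ⨅ e : ↥E, ⨅ z₁ : ↥Eᗮ, ⨅ z₂ : ↥Eᗮ, (v (↑x - ↑e + ↑z₁) + w (↑e + ↑z₂)) := by
    refine iInf_congr fun e => ?_
    rw [show projFn E v (x - e) = ⨅ z₁ : ↥Eᗮ, v (↑x - ↑e + ↑z₁) by
      refine iInf_congr fun z₁ => ?_; congr 1 <;> (try push_cast) <;> (try ring)]
    exact my_iInf_add (by simpa using hbotv (x - e)) (hbotw e)
  rw [hRHS]
  show (⨅ z : ↥Eᗮ, ⨅ y, v (↑x + ↑z - y) + w y) = _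
  apply le_antisymm
  · refine le_iInf fun e => le_iInf fun z₁ => le_iInf fun z₂ => ?_
    refine le_trans (iInf_le _ (z₁ + z₂)) (le_trans (iInf_le _ ((e : EuclideanSpace ℝ (Fin n)) + ↑z₂)) (le_of_eq ?_))
    congr 2
    push_cast
    abel
  · refine le_iInf fun z => le_iInf fun y => ?_
    have hy : y ∈ E ⊔ Eᗮ := hsup ▸ Submodule.mem_top
    obtain ⟨a, ha, b, hb, hab⟩ := Submodule.mem_sup.mp hy
    refine le_trans (iInf_le _ ⟨a, ha⟩) (le_trans (iInf_le _ (z - ⟨b, hb⟩)) (le_trans (iInf_le _ ⟨b, hb⟩) (le_of_eq ?_)))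
    rw [← hab]
    congr 2
    push_cast
    abel

/-- projection commutes with epi-multiplication -/
lemma projFn_epiMul {n : ℕ} (E : Submodule ℝ (EuclideanSpace ℝ (Fin n)))
    (u : EuclideanSpace ℝ (Fin n) → EReal) {lam : ℝ} (hlam : 0 ≤ lam) :
    projFn E (epiMul lam u) = epiMul lam (projFn E u) := by
  haveI : Nonempty ↥Eᗮ := ⟨0⟩
  rcases eq_or_lt_of_le hlam with h0 | hpos
  · subst h0
    rw [show epiMul (0:ℝ) u = indicatorE {0} from if_pos rfl,
      show epiMul (0:ℝ) (projFn E u) = indicatorE {0} from if_pos rfl]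
    funext x
    simp only [projFn, indicatorE_apply, mem_singleton_iff]
    by_cases hx : x = 0
    · subst hx
      rw [if_pos rfl]
      apply le_antisymm
      · refine le_trans (iInf_le _ (0 : ↥Eᗮ)) (le_of_eq ?_)
        rw [if_pos (by simp)]
      · refine le_iInf fun z => ?_
        split_ifs <;> simp
    · have hne : ∀ z : ↥Eᗮ, ((x : EuclideanSpace ℝ (Fin n)) + ↑z) ≠ 0 := by
        intro z h
        apply hx
        have hxE : (x : EuclideanSpace ℝ (Fin n)) ∈ E ⊓ Eᗮ := by
          refine ⟨x.2, ?_⟩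
          rw [eq_neg_of_add_eq_zero_left h]
          exact neg_mem z.2
        have hb := (Submodule.orthogonal_disjoint E).le_bot hxE
        rw [Submodule.mem_bot] at hb
        exact Subtype.ext hb
      rw [if_neg (by simpa using hx)]
      refine iInf_eq_top.mpr fun z => ?_
      rw [if_neg (hne z)]
  · have hne : lam ≠ 0 := hpos.ne'
    funext x
    simp only [epiMul, if_neg hne, projFn]
    rw [my_mul_iInf hpos]
    apply le_antisymm
    · refine le_iInf fun z => le_trans (iInf_le _ (lam • z)) (le_of_eq ?_)
      congr 2
      push_cast
      rw [smul_add, smul_smul, inv_mul_cancel₀ hne, one_smul]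
    · refine le_iInf fun z => le_trans (iInf_le _ (lam⁻¹ • z)) (le_of_eq ?_)
      congr 2
      push_cast
      rw [smul_add]

end Aux

/-- projection onto a subspace commutes with epi-sums of epi-multiples of proper,
lsc, super-coercive convex functions:
`proj_E((λ₁ ⊡ u₁) □ (λ₂ ⊡ u₂)) = (λ₁ ⊡ proj_E u₁) □ (λ₂ ⊡ proj_E u₂)`. -/
theorem projFn_infConv_epiMul {n j : ℕ} (hj : 1 ≤ j) (hjn : j ≤ n)
    (E : Submodule ℝ (EuclideanSpace ℝ (Fin n))) (hE : Module.finrank ℝ E = j)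
    (u₁ u₂ : EuclideanSpace ℝ (Fin n) → EReal)
    (h₁proper : ProperE u₁) (h₁lsc : LowerSemicontinuous u₁) (h₁conv : ConvexE u₁)
    (h₁sc : SuperCoercive u₁)
    (h₂proper : ProperE u₂) (h₂lsc : LowerSemicontinuous u₂) (h₂conv : ConvexE u₂)
    (h₂sc : SuperCoercive u₂)
    (lam₁ lam₂ : ℝ) (hlam₁ : 0 ≤ lam₁) (hlam₂ : 0 ≤ lam₂) :
    projFn E (infConv (epiMul lam₁ u₁) (epiMul lam₂ u₂))
      = infConv (epiMul lam₁ (projFn E u₁)) (epiMul lam₂ (projFn E u₂)) := by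
  obtain ⟨m₁, hm₁⟩ := exists_lb h₁proper h₁lsc h₁sc
  obtain ⟨m₂, hm₂⟩ := exists_lb h₂proper h₂lsc h₂sc
  set m : ℝ := min (min (lam₁ * m₁) 0) (min (lam₂ * m₂) 0) with hm
  have hv : ∀ x, (m : EReal) ≤ epiMul lam₁ u₁ x := fun x =>
    le_trans (by exact_mod_cast min_le_left _ _) (epiMul_lb hm₁ hlam₁ x)
  have hw : ∀ x, (m : EReal) ≤ epiMul lam₂ u₂ x := fun x =>
    le_trans (by exact_mod_cast min_le_right _ _) (epiMul_lb hm₂ hlam₂ x)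
  rw [← projFn_epiMul E u₁ hlam₁, ← projFn_epiMul E u₂ hlam₂]
  exact projFn_infConv E hv hw

end
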